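/- Let A and B be abelian groups. Suppose that every element of A has finite order, and that for every a ∈ A and every finite-order b ∈ B the orders of a and b are coprime. Let Γ be an infinite finitely generated group. If A ≀ Γ and B ≀ Γ are Hopfian, then (A × B) ≀ Γ is Hopfian. -/

import Mathlib

/-- A group is Hopfian if every surjective endomorphism is injective. -/
def IsHopfian (G : Type*) [Group G] : Prop :=
  ∀ φ : G →* G, Function.Surjective φ → Function.Injective φ

/-- A unital ring is directly finite if `x * y = 1` implies `y * x = 1`. -/
def DirectlyFinite (R : Type*) [Ring R] : Prop :=
  ∀ x y : R, x * y = 1 → y * x = 1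

/-- The action of `Γ` on the base group `Γ →₀ A` of the wreath product,
given by `(g • f) x = f (g⁻¹ * x)`. -/
noncomputable def wreathAction (A : Type*) [AddCommGroup A] (Γ : Type*) [Group Γ] :
    Γ →* MulAut (Multiplicative (Γ →₀ A)) where
  toFun g := AddEquiv.toMultiplicative (Finsupp.domCongr (Equiv.mulLeft g))
  map_one' := by
    apply MulEquiv.ext
    intro f
    apply Multiplicative.toAdd.injective
    apply Finsupp.ext
    intro x
    simp [Finsupp.domCongr_apply]
    rfl
  map_mul' g₁ g₂ := by
    apply MulEquiv.ext
    intro f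
    apply Multiplicative.toAdd.injective
    apply Finsupp.ext
    intro x
    simp [Finsupp.domCongr_apply, mul_assoc]
    rfl

/-- The (restricted) wreath product `A ≀ Γ`: the semidirect product of the group
`Γ →₀ A` of finitely supported functions `Γ → A` (pointwise addition) by `Γ`,
acting by `(g • f) x = f (g⁻¹ * x)`. -/
abbrev WreathProduct (A : Type*) [AddCommGroup A] (Γ : Type*) [Group Γ] : Type _ :=
  SemidirectProduct (Multiplicative (Γ →₀ A)) Γ (wreathAction A Γ)

/-- The base group `Γ →₀ A` of the wreath product, as a subgroup of `A ≀ Γ`. -/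
noncomputable def WreathProduct.base (A : Type*) [AddCommGroup A] (Γ : Type*) [Group Γ] :
    Subgroup (WreathProduct A Γ) :=
  (SemidirectProduct.inl : Multiplicative (Γ →₀ A) →* WreathProduct A Γ).range

open SemidirectProduct Finsupp

set_option linter.unusedSectionVars false

section Aux
variable {Γ : Type*} [Group Γ] {C : Type*} [AddCommGroup C] {C' : Type*} [AddCommGroup C']

lemma wreathAction_toAdd_apply (g : Γ) (H : Multiplicative (Γ →₀ C)) (y : Γ) :
    Multiplicative.toAdd (wreathAction C Γ g H) y = Multiplicative.toAdd H (g⁻¹ * y) := rfl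

/-- functorial map on base groups -/
noncomputable def fmap (f : C →+ C') : Multiplicative (Γ →₀ C) →* Multiplicative (Γ →₀ C') :=
  AddMonoidHom.toMultiplicative (Finsupp.mapRange.addMonoidHom f)

@[simp] lemma fmap_toAdd_apply (f : C →+ C') (H : Multiplicative (Γ →₀ C)) (y : Γ) :
    Multiplicative.toAdd (fmap f H) y = f (Multiplicative.toAdd H y) := rfl

lemma fmap_act (f : C →+ C') (g : Γ) (H : Multiplicative (Γ →₀ C)) :
    fmap f (wreathAction C Γ g H) = wreathAction C' Γ g (fmap f H) := by
  apply Multiplicative.toAdd.injective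
  ext y
  rfl

/-- functorial map on wreath products -/
noncomputable def wmap (f : C →+ C') : WreathProduct C Γ →* WreathProduct C' Γ where
  toFun w := ⟨fmap f w.left, w.right⟩
  map_one' := by ext <;> simp
  map_mul' a b := by
    ext
    · simp [SemidirectProduct.mul_left, fmap_act]
    · simp [SemidirectProduct.mul_right]

@[simp] lemma wmap_left (f : C →+ C') (w : WreathProduct C Γ) :
    (wmap f w).left = fmap f w.left := rfl
@[simp] lemma wmap_right (f : C →+ C') (w : WreathProduct C Γ) :
    (wmap f w).right = w.right := rfl


noncomputable def wequiv (e : C ≃+ C') : WreathProduct C Γ ≃* WreathProduct C' Γ where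
  toFun := wmap e.toAddMonoidHom
  invFun := wmap e.symm.toAddMonoidHom
  left_inv w := by
    ext : 1
    · apply Multiplicative.toAdd.injective
      ext y
      simp
    · rfl
  right_inv w := by
    ext : 1
    · apply Multiplicative.toAdd.injective
      ext y
      simp
    · rfl
  map_mul' := map_mul _

lemma isHopfian_of_mulEquiv {G H : Type*} [Group G] [Group H] (e : G ≃* H)
    (hG : IsHopfian G) : IsHopfian H := by
  intro ψ hs
  have h1 : Function.Surjective (e.symm.toMonoidHom.comp (ψ.comp e.toMonoidHom)) :=
    e.symm.surjective.comp (hs.comp e.surjective)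
  have h2 := hG _ h1
  intro x y hxy
  have h3 : e.symm.toMonoidHom.comp (ψ.comp e.toMonoidHom) (e.symm x)
      = e.symm.toMonoidHom.comp (ψ.comp e.toMonoidHom) (e.symm y) := by
    simp [hxy]
  exact e.symm.injective (h2 h3)

lemma step_right_one (hc : ∃ c : C, c + c ≠ 0) (φ : WreathProduct C Γ →* WreathProduct C Γ)
    (hφ : Function.Surjective φ) : ∀ x : WreathProduct C Γ, x.right = 1 → (φ x).right = 1 := by
  obtain ⟨c, hc⟩ := hc
  intro x hx
  by_contra hγ
  set m := φ x with hm
  set γ := m.right with hγdef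
  have basecomm : ∀ a b : WreathProduct C Γ, a.right = 1 → b.right = 1 → a * b = b * a := by
    intro a b ha hb
    ext
    · simp [SemidirectProduct.mul_left, ha, hb, mul_comm]
    · simp [SemidirectProduct.mul_right, ha, hb]
  have hcomm : ∀ h : Multiplicative (Γ →₀ C),
      inl h * m * (inl h)⁻¹ * m = m * (inl h * m * (inl h)⁻¹) := by
    intro h
    obtain ⟨u, hu⟩ := hφ (inl h)
    have h1 : (u * x * u⁻¹).right = 1 := by
      simp [SemidirectProduct.mul_right, SemidirectProduct.inv_right, hx]
    have h2 := congrArg φ (basecomm _ _ h1 hx)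
    simpa [map_mul, map_inv, hu, ← hm] using h2
  have e1 : ¬ (1 : Γ) = γ := fun h => hγ h.symm
  have e2 : ¬ (1 : Γ) = γ⁻¹ := fun h => hγ (by rw [← inv_inv γ, ← h, inv_one])
  have key := congrArg (fun z : WreathProduct C Γ => Multiplicative.toAdd z.left γ)
    (hcomm (Multiplicative.ofAdd (Finsupp.single 1 c)))
  simp [SemidirectProduct.mul_left, SemidirectProduct.inv_left,
    wreathAction_toAdd_apply, Finsupp.single_apply, e1, e2, toAdd_mul, toAdd_inv,
    Finsupp.add_apply, Finsupp.neg_apply, ← hγdef] at key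
  apply hc
  have h9 : (-c : C) = c := by
    rw [add_assoc] at key
    exact add_right_cancel (add_left_cancel key)
  calc c + c = -c + c := by rw [h9]
    _ = 0 := neg_add_cancel c


lemma wmap_comp_apply {C'' : Type*} [AddCommGroup C''] (f : C →+ C') (f' : C' →+ C'')
    (w : WreathProduct C Γ) : wmap f' (wmap f w) = wmap (f'.comp f) w := by
  ext : 1
  · apply Multiplicative.toAdd.injective
    ext y
    simp
  · rfl

lemma wmap_id (w : WreathProduct C Γ) : wmap (AddMonoidHom.id C) w = w := by
  ext : 1
  · apply Multiplicative.toAdd.injective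
    ext y
    simp
  · rfl

lemma wmap_inr (f : C →+ C') (g : Γ) :
    wmap f (SemidirectProduct.inr g) = SemidirectProduct.inr g := by
  ext
  · rw [wmap_left, left_inr, left_inr, map_one]
  · rfl

end Aux

section Product

open SemidirectProduct

set_option linter.unusedSectionVars false

variable {Γ : Type*} [Group Γ] {A B : Type*} [AddCommGroup A] [AddCommGroup B]

lemma pA_one_iff (w : WreathProduct (A × B) Γ) :
    wmap (AddMonoidHom.snd A B) w = 1 ↔
      w.right = 1 ∧ ∀ y, (Multiplicative.toAdd w.left y).2 = 0 := by
  constructor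
  · intro h
    have h1 := congrArg SemidirectProduct.right h
    have h2 := congrArg SemidirectProduct.left h
    refine ⟨h1, fun y => ?_⟩
    have h3 := congrArg (fun L : Multiplicative (Γ →₀ B) => Multiplicative.toAdd L y) h2
    simpa using h3
  · rintro ⟨h1, h2⟩
    ext : 1
    · apply Multiplicative.toAdd.injective
      ext y
      simpa using h2 y
    · exact h1

lemma jA_pB (w : WreathProduct (A × B) Γ) (h : ∀ y, (Multiplicative.toAdd w.left y).2 = 0) :
    wmap (AddMonoidHom.inl A B) (wmap (AddMonoidHom.fst A B) w) = w := by
  ext : 1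
  · apply Multiplicative.toAdd.injective
    apply Finsupp.ext
    intro y
    simp only [wmap_left, fmap_toAdd_apply, AddMonoidHom.inl_apply, AddMonoidHom.coe_fst]
    refine Prod.ext ?_ ?_
    · rfl
    · exact (h y).symm
  · rfl

lemma step_two (htor : ∀ a : A, IsOfFinAddOrder a)
    (hcop : ∀ (a : A) (b : B), IsOfFinAddOrder b →
      Nat.Coprime (addOrderOf a) (addOrderOf b))
    (hc : ∃ c : A × B, c + c ≠ 0)
    (φ : WreathProduct (A × B) Γ →* WreathProduct (A × B) Γ)
    (hφ : Function.Surjective φ) :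
    ∀ x, wmap (AddMonoidHom.snd A B) x = 1 → wmap (AddMonoidHom.snd A B) (φ x) = 1 := by
  intro x hx
  obtain ⟨hr, hsnd⟩ := (pA_one_iff x).mp hx
  set f := Multiplicative.toAdd x.left with hf
  set n := ∏ y ∈ f.support, addOrderOf ((f y).1) with hn
  have hn0 : 0 < n := Finset.prod_pos fun y _ => (htor _).addOrderOf_pos
  have hval : ∀ y, n • f y = 0 := by
    intro y
    have h2 : (f y).2 = 0 := hsnd y
    by_cases hy : y ∈ f.support
    · have hd : addOrderOf ((f y).1) ∣ n := Finset.dvd_prod_of_mem _ hy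
      have h1 : n • (f y).1 = 0 := addOrderOf_dvd_iff_nsmul_eq_zero.mp hd
      refine Prod.ext ?_ ?_
      · rw [Prod.smul_fst, h1]
        rfl
      · rw [Prod.smul_snd, h2, smul_zero]
        rfl
    · rw [Finsupp.notMem_support_iff.mp hy, smul_zero]
  have hxleft : x.left ^ n = 1 := by
    apply Multiplicative.toAdd.injective
    apply Finsupp.ext
    intro y
    rw [toAdd_pow, Finsupp.smul_apply]
    simpa using hval y
  have hxn : x ^ n = 1 := by
    have hxinl : x = inl x.left := by
      ext : 1
      · rw [left_inl]
      · rw [right_inl, hr]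
    rw [hxinl, ← map_pow, hxleft, map_one]
  have hφn : (φ x) ^ n = 1 := by rw [← map_pow, hxn, map_one]
  have hr' : (φ x).right = 1 := step_right_one hc φ hφ x hr
  set g := Multiplicative.toAdd (φ x).left with hg
  have hgn : ∀ y, n • (g y) = 0 := by
    intro y
    have hinl : φ x = inl (φ x).left := by
      ext : 1
      · rw [left_inl]
      · rw [right_inl, hr']
    have hL : (φ x).left ^ n = 1 := by
      apply inl_injective (φ := wreathAction (A × B) Γ)
      rw [map_pow, ← hinl, hφn, map_one]
    have h5 := congrArg (fun L : Multiplicative (Γ →₀ (A × B)) => Multiplicative.toAdd L y) hL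
    simpa [toAdd_pow] using h5
  rw [pA_one_iff]
  refine ⟨hr', fun y => ?_⟩
  set b := (g y).2 with hb
  have hnb : n • b = 0 := by
    have := congrArg Prod.snd (hgn y)
    simpa using this
  have hfb : IsOfFinAddOrder b := isOfFinAddOrder_iff_nsmul_eq_zero.mpr ⟨n, hn0, hnb⟩
  have hdvd : addOrderOf b ∣ n := addOrderOf_dvd_of_nsmul_eq_zero hnb
  have hcopn : Nat.Coprime n (addOrderOf b) :=
    Nat.Coprime.prod_left fun y' _ => hcop _ b hfb
  have h1 : addOrderOf b = 1 := (Nat.coprime_comm.mp hcopn).eq_one_of_dvd hdvd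
  exact AddMonoid.addOrderOf_eq_one_iff.mp h1

end Product

/-- Let `A`, `B` be abelian groups such that `A` is torsion and the orders of torsion
elements of `A` and `B` are coprime, and let `Γ` be an infinite finitely generated
group. If `A ≀ Γ` and `B ≀ Γ` are Hopfian, then `(A × B) ≀ Γ` is Hopfian. -/
theorem wreath_product_base_product_hopfian (A B : Type*) [AddCommGroup A]
    [AddCommGroup B] (htor : ∀ a : A, IsOfFinAddOrder a)
    (hcop : ∀ (a : A) (b : B), IsOfFinAddOrder b →
      Nat.Coprime (addOrderOf a) (addOrderOf b))
    (Γ : Type*) [Group Γ] [Group.FG Γ] [Infinite Γ]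
    (hA : IsHopfian (WreathProduct A Γ)) (hB : IsHopfian (WreathProduct B Γ)) :
    IsHopfian (WreathProduct (A × B) Γ) := by
  rcases subsingleton_or_nontrivial A with hA0 | hA1
  · -- A trivial : (A × B) ≀ Γ ≅ B ≀ Γ
    have e : B ≃+ A × B :=
      { toFun := fun b => (0, b)
        invFun := Prod.snd
        left_inv := fun b => rfl
        right_inv := fun p => by
          refine Prod.ext ?_ ?_
          · exact Subsingleton.elim _ _
          · rfl
        map_add' := fun b b' => by
          refine Prod.ext ?_ ?_
          · simp
          · rfl }
    exact isHopfian_of_mulEquiv (wequiv e) hB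
  rcases subsingleton_or_nontrivial B with hB0 | hB1
  · -- B trivial : (A × B) ≀ Γ ≅ A ≀ Γ
    have e : A ≃+ A × B :=
      { toFun := fun a => (a, 0)
        invFun := Prod.fst
        left_inv := fun a => rfl
        right_inv := fun p => by
          refine Prod.ext ?_ ?_
          · rfl
          · exact Subsingleton.elim _ _
        map_add' := fun a a' => by
          refine Prod.ext ?_ ?_
          · rfl
          · simp }
    exact isHopfian_of_mulEquiv (wequiv e) hA
  -- main case : both nontrivial
  have hc : ∃ c : A × B, c + c ≠ 0 := by
    obtain ⟨a, ha⟩ := exists_ne (0 : A)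
    obtain ⟨b, hb⟩ := exists_ne (0 : B)
    by_cases h2b : b + b = 0
    · have hfb : IsOfFinAddOrder b :=
        isOfFinAddOrder_iff_nsmul_eq_zero.mpr ⟨2, by norm_num, by rw [two_nsmul]; exact h2b⟩
      have hob : addOrderOf b = 2 := by
        have hdvd : addOrderOf b ∣ 2 :=
          addOrderOf_dvd_of_nsmul_eq_zero (by rw [two_nsmul]; exact h2b)
        rcases (Nat.dvd_prime Nat.prime_two).mp hdvd with h | h
        · exact absurd (AddMonoid.addOrderOf_eq_one_iff.mp h) hb
        · exact h
      refine ⟨(a, 0), fun haa => ?_⟩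
      have haA : a + a = 0 := by
        have := congrArg Prod.fst haa
        simpa using this
      have hda : addOrderOf a ∣ 2 :=
        addOrderOf_dvd_of_nsmul_eq_zero (by rw [two_nsmul]; exact haA)
      have hca := hcop a b hfb
      rw [hob] at hca
      rcases (Nat.dvd_prime Nat.prime_two).mp hda with h | h
      · exact ha (AddMonoid.addOrderOf_eq_one_iff.mp h)
      · rw [h] at hca
        norm_num [Nat.Coprime] at hca
    · refine ⟨(0, b), fun h => h2b ?_⟩
      have := congrArg Prod.snd h
      simpa using this
  intro φ hφ
  have step1 := step_right_one hc φ hφ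
  have step2 := step_two htor hcop hc φ hφ
  -- the induced endomorphism of B ≀ Γ
  have hsec : Function.RightInverse (wmap (AddMonoidHom.inr A B) : WreathProduct B Γ →* _)
      (wmap (AddMonoidHom.snd A B)) := by
    intro y
    rw [wmap_comp_apply, AddMonoidHom.snd_comp_inr, wmap_id]
  have hker : (wmap (AddMonoidHom.snd A B) : WreathProduct (A × B) Γ →* _).ker ≤
      ((wmap (AddMonoidHom.snd A B)).comp φ).ker := by
    intro w hw
    rw [MonoidHom.mem_ker] at hw ⊢
    exact step2 w hw
  set φB := (wmap (AddMonoidHom.snd A B) : WreathProduct (A × B) Γ →* _).liftOfRightInverse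
    (wmap (AddMonoidHom.inr A B)) hsec ⟨(wmap (AddMonoidHom.snd A B)).comp φ, hker⟩ with hφBdef
  have hφB : ∀ w, φB (wmap (AddMonoidHom.snd A B) w) = wmap (AddMonoidHom.snd A B) (φ w) :=
    fun w => (wmap (AddMonoidHom.snd A B)).liftOfRightInverse_comp_apply
      (wmap (AddMonoidHom.inr A B)) hsec _ w
  have hφBsurj : Function.Surjective φB := by
    intro y
    obtain ⟨w, hw⟩ := hφ (wmap (AddMonoidHom.inr A B) y)
    exact ⟨wmap (AddMonoidHom.snd A B) w, by rw [hφB, hw]; exact hsec y⟩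
  have hφBinj := hB φB hφBsurj
  have fact_a : ∀ w, φ w = 1 → wmap (AddMonoidHom.snd A B) w = 1 := by
    intro w hw
    apply hφBinj
    rw [hφB, hw, map_one, map_one]
  have fact_b : ∀ z, wmap (AddMonoidHom.snd A B) z = 1 →
      ∃ y, wmap (AddMonoidHom.snd A B) y = 1 ∧ φ y = z := by
    intro z hz
    obtain ⟨y, hy⟩ := hφ z
    refine ⟨y, ?_, hy⟩
    apply hφBinj
    rw [hφB, hy, hz, map_one]
  -- the induced endomorphism of A ≀ Γ
  set Φ : WreathProduct A Γ →* WreathProduct A Γ :=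
    (wmap (AddMonoidHom.fst A B)).comp (φ.comp (wmap (AddMonoidHom.inl A B))) with hΦdef
  have hΦ : ∀ t, Φ t = wmap (AddMonoidHom.fst A B) (φ (wmap (AddMonoidHom.inl A B) t)) :=
    fun _ => rfl
  have hbase : ∀ z : WreathProduct A Γ, z.right = 1 → ∃ t, Φ t = z := by
    intro z hz
    have h1 : wmap (AddMonoidHom.snd A B) (wmap (AddMonoidHom.inl A B) z) = 1 := by
      rw [pA_one_iff]
      constructor
      · rw [wmap_right]; exact hz
      · intro y
        simp
    obtain ⟨y, hy1, hy2⟩ := fact_b _ h1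
    refine ⟨wmap (AddMonoidHom.fst A B) y, ?_⟩
    rw [hΦ, jA_pB y ((pA_one_iff y).mp hy1).2, hy2, wmap_comp_apply,
      AddMonoidHom.fst_comp_inl, wmap_id]
  have hΦsurj : Function.Surjective Φ := by
    have hrange : ∀ w, ∃ t, Φ t = wmap (AddMonoidHom.fst A B) (φ w) := by
      intro w
      obtain ⟨t1, ht1⟩ := hbase (wmap (AddMonoidHom.fst A B) (φ (SemidirectProduct.inl w.left)))
        (by rw [wmap_right]; exact step1 _ (SemidirectProduct.right_inl _))
      refine ⟨t1 * SemidirectProduct.inr w.right, ?_⟩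
      rw [map_mul, ht1, hΦ, wmap_inr, ← map_mul, ← map_mul,
        SemidirectProduct.inl_left_mul_inr_right w]
    intro t
    obtain ⟨w, hw⟩ := hφ (wmap (AddMonoidHom.inl A B) t)
    obtain ⟨t', ht'⟩ := hrange w
    refine ⟨t', ?_⟩
    rw [ht', hw, wmap_comp_apply, AddMonoidHom.fst_comp_inl, wmap_id]
  have hΦinj := hA Φ hΦsurj
  have hker1 : ∀ w : WreathProduct (A × B) Γ, φ w = 1 → w = 1 := by
    intro w hw
    have h1 := fact_a w hw
    have h2 := jA_pB w ((pA_one_iff w).mp h1).2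
    have h3 : Φ (wmap (AddMonoidHom.fst A B) w) = 1 := by
      rw [hΦ, h2, hw, map_one]
    have h4 : wmap (AddMonoidHom.fst A B) w = 1 := hΦinj (by rw [h3, map_one])
    rw [← h2, h4, map_one]
  intro a b hab
  have h5 : φ (a * b⁻¹) = 1 := by rw [map_mul, map_inv, hab, mul_inv_cancel]
  exact mul_inv_eq_one.mp (hker1 _ h5)
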